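/- Let I be an SPA-ST instance and I' the HRT instance obtained from I by the cloning construction. If M is a stable matching in I, then the matching M' in I' formed by taking M (viewing student-project pairs as resident-hospital pairs) together with a resident-complete assignment of all dummy residents to remaining hospital positions of their associated lecturer's hospitals is a stable matching in I', and |M'| = |M| + Σ_{l_k} max(0, (Σ_{p_r∈P_k} c_r) − d_k). -/

import Mathlib

open scoped Classical
open Finset

/-- An instance of the Student-Project Allocation problem with lecturer
preferences over students, with ties (SPA-ST).  Preferences are encoded by
rank functions: a lower rank means more preferred; equal ranks encode ties. -/
structure SPAST (S P L : Type) where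
  /-- the lecturer offering each project -/
  lec : P → L
  /-- project capacities -/
  cap : P → ℕ
  /-- lecturer capacities -/
  dcap : L → ℕ
  /-- `acc s p` iff student `s` finds project `p` acceptable -/
  acc : S → P → Prop
  /-- student rank function (lower is better); meaningful on acceptable projects -/
  sRank : S → P → ℕ
  /-- lecturer rank function over students (lower is better) -/
  lRank : L → S → ℕ

variable {S P L : Type}

/-- students assigned to a project in `M` -/
noncomputable def projAssignees [Fintype S] (M : S → Option P) (p : P) : Finset S :=
  Finset.univ.filter (fun s => M s = some p)

/-- students assigned to some project of lecturer `k` in `M` -/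
noncomputable def lecAssignees [Fintype S] (I : SPAST S P L) (M : S → Option P) (k : L) :
    Finset S :=
  Finset.univ.filter (fun s => ∃ p, M s = some p ∧ I.lec p = k)

def IsMatching [Fintype S] (I : SPAST S P L) (M : S → Option P) : Prop :=
  (∀ s p, M s = some p → I.acc s p) ∧
  (∀ p, (projAssignees M p).card ≤ I.cap p) ∧
  (∀ k, (lecAssignees I M k).card ≤ I.dcap k)

def ProjFull [Fintype S] (I : SPAST S P L) (M : S → Option P) (p : P) : Prop :=
  (projAssignees M p).card = I.cap p

def LecFull [Fintype S] (I : SPAST S P L) (M : S → Option P) (k : L) : Prop :=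
  (lecAssignees I M k).card = I.dcap k

/-- `s` finds `p` acceptable and is unassigned or strictly prefers `p` to `M(s)`. -/
def WantsToMove (I : SPAST S P L) (M : S → Option P) (s : S) (p : P) : Prop :=
  I.acc s p ∧ (M s = none ∨ ∃ p', M s = some p' ∧ I.sRank s p < I.sRank s p')

/-- `(s, p)` is a blocking pair of `M`. -/
def Blocks [Fintype S] (I : SPAST S P L) (M : S → Option P) (s : S) (p : P) : Prop :=
  WantsToMove I M s p ∧
  ( (¬ ProjFull I M p ∧ ¬ LecFull I M (I.lec p)) ∨
    (¬ ProjFull I M p ∧ LecFull I M (I.lec p) ∧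
      (s ∈ lecAssignees I M (I.lec p) ∨
       ∃ s' ∈ lecAssignees I M (I.lec p), I.lRank (I.lec p) s < I.lRank (I.lec p) s')) ∨
    (ProjFull I M p ∧
       ∃ s' ∈ projAssignees M p, I.lRank (I.lec p) s < I.lRank (I.lec p) s') )

def Stable [Fintype S] (I : SPAST S P L) (M : S → Option P) : Prop :=
  IsMatching I M ∧ ∀ s p, ¬ Blocks I M s p

/-- the number of assigned agents in a matching -/
noncomputable def msize {A B : Type} [Fintype A] (M : A → Option B) : ℕ :=
  (Finset.univ.filter (fun a => (M a).isSome)).card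

/-- An instance of the Hospitals/Residents problem with Ties (HRT), encoded by
rank functions (lower rank = more preferred; equal ranks are ties). -/
structure HRT (R H : Type) where
  /-- hospital capacities -/
  cap : H → ℕ
  /-- `acc r h` iff `(r, h)` is an acceptable pair -/
  acc : R → H → Prop
  /-- resident rank function over hospitals -/
  rRank : R → H → ℕ
  /-- hospital rank function over residents -/
  hRank : H → R → ℕ

/-- residents assigned to a hospital -/
noncomputable def hospAssignees {R H : Type} [Fintype R] (M : R → Option H) (h : H) :
    Finset R :=
  Finset.univ.filter (fun r => M r = some h)

def HIsMatching {R H : Type} [Fintype R] (J : HRT R H) (M : R → Option H) : Prop :=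
  (∀ r h, M r = some h → J.acc r h) ∧ (∀ h, (hospAssignees M h).card ≤ J.cap h)

/-- `(r, h)` is a blocking pair of `M` in HRT -/
def HBlocks {R H : Type} [Fintype R] (J : HRT R H) (M : R → Option H) (r : R) (h : H) :
    Prop :=
  J.acc r h ∧
  (M r = none ∨ ∃ h', M r = some h' ∧ J.rRank r h < J.rRank r h') ∧
  ((hospAssignees M h).card < J.cap h ∨
    ∃ r' ∈ hospAssignees M h, J.hRank h r < J.hRank h r')

def HStable {R H : Type} [Fintype R] (J : HRT R H) (M : R → Option H) : Prop :=
  HIsMatching J M ∧ ∀ r h, ¬ HBlocks J M r h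

/-- `f_k`: the number of dummy residents created for lecturer `k`, namely
`max 0 ((Σ_{p ∈ P_k} c_p) - d_k)` (truncated ℕ-subtraction). -/
noncomputable def fk [Fintype P] (I : SPAST S P L) (k : L) : ℕ :=
  (∑ p ∈ Finset.univ.filter (fun p => I.lec p = k), I.cap p) - I.dcap k

/-- the dummy residents of the cloned instance -/
abbrev Dummy [Fintype P] (I : SPAST S P L) : Type := Σ k : L, Fin (fk I k)

/-- The cloning construction from SPA-ST to HRT.  Residents are students plus
dummies; hospitals are the projects with their capacities.  A student-resident
inherits the student's preferences; a dummy of lecturer `k` finds exactly the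
hospitals of `k` acceptable, all in a single first-place tie (rank `0`), and
each hospital of `k` places all dummies of `k` in a first-place tie (rank `0`)
ahead of the real residents, whose lecturer-ranks are shifted up by one. -/
noncomputable def clone [Fintype P] (I : SPAST S P L) : HRT (S ⊕ Dummy I) P where
  cap := I.cap
  acc := fun r h =>
    match r with
    | Sum.inl s => I.acc s h
    | Sum.inr d => I.lec h = d.1
  rRank := fun r h =>
    match r with
    | Sum.inl s => I.sRank s h
    | Sum.inr _ => 0
  hRank := fun h r =>
    match r with
    | Sum.inl s => I.lRank (I.lec h) s + 1
    | Sum.inr _ => 0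


section AuxStmt2

open scoped Classical

lemma card_filter_sum {A B : Type} [Fintype A] [Fintype B] (p : A ⊕ B → Prop)
    [DecidablePred p] :
    (Finset.univ.filter p).card
      = (Finset.univ.filter (fun a => p (Sum.inl a))).card
      + (Finset.univ.filter (fun b => p (Sum.inr b))).card := by
  classical
  rw [Finset.card_filter, Finset.card_filter, Finset.card_filter,
    Fintype.sum_sum_type]

variable {S P L : Type}

lemma projAssignees_card_le' [Fintype S] [Fintype P] [Fintype L] (I : SPAST S P L)
    (M : S → Option P) (M' : S ⊕ Dummy I → Option P)
    (hres : ∀ s, M' (Sum.inl s) = M s) (p : P) :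
    (projAssignees M p).card ≤ (hospAssignees M' p).card := by
  classical
  apply Finset.card_le_card_of_injOn Sum.inl
  · intro s hs
    simp only [projAssignees, Finset.mem_coe, Finset.mem_filter, Finset.mem_univ, true_and] at hs
    simp [hospAssignees, hres, hs]
  · intro a _ b _ hab; exact Sum.inl.inj hab

lemma card_dummy_filter [Fintype S] [Fintype P] [Fintype L] (I : SPAST S P L)
    (k : L) :
    (Finset.univ.filter (fun d : Dummy I => d.1 = k)).card = fk I k := by
  classical
  rw [Finset.card_filter, ← Finset.univ_sigma_univ, Finset.sum_sigma]
  rw [Finset.sum_eq_single k]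
  · simp
  · intro q _ hq; simp [hq]
  · intro hk; simp at hk

lemma hosp_full_of_lecFull [Fintype S] [Fintype P] [Fintype L]
    (I : SPAST S P L) (M : S → Option P) (M' : S ⊕ Dummy I → Option P)
    (hres : ∀ s, M' (Sum.inl s) = M s)
    (hdum : ∀ d : Dummy I, ∃ h, M' (Sum.inr d) = some h ∧ I.lec h = d.1)
    (hhcap : ∀ h, (hospAssignees M' h).card ≤ I.cap h)
    (hpcap : ∀ p, (projAssignees M p).card ≤ I.cap p)
    (k : L) (hLF : LecFull I M k) (h : P) (hlh : I.lec h = k) :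
    (hospAssignees M' h).card = I.cap h := by
  classical
  set F := Finset.univ.filter (fun p : P => I.lec p = k) with hF
  have hhF : h ∈ F := by simp [hF, hlh]
  rw [LecFull] at hLF
  have hlec_eq : lecAssignees I M k = F.biUnion (fun p => projAssignees M p) := by
    ext s
    simp only [lecAssignees, projAssignees, hF, Finset.mem_biUnion, Finset.mem_filter,
      Finset.mem_univ, true_and]
    tauto
  have hdisj1 : ∀ p ∈ F, ∀ q ∈ F, p ≠ q →
      Disjoint (projAssignees M p) (projAssignees M q) := by
    intro p _ q _ hpq
    rw [Finset.disjoint_left]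
    intro a ha hb
    simp only [projAssignees, Finset.mem_filter, Finset.mem_univ, true_and] at ha hb
    rw [ha] at hb
    exact hpq (Option.some_injective _ hb)
  have key2 : I.dcap k ≤ ∑ p ∈ F, I.cap p := by
    calc I.dcap k = (lecAssignees I M k).card := hLF.symm
      _ = ∑ p ∈ F, (projAssignees M p).card := by
          rw [hlec_eq, Finset.card_biUnion hdisj1]
      _ ≤ ∑ p ∈ F, I.cap p := Finset.sum_le_sum (fun p _ => hpcap p)
  set A := Finset.univ.filter
      (fun r : S ⊕ Dummy I => ∃ p, M' r = some p ∧ I.lec p = k) with hA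
  have hAeq : A = F.biUnion (fun p => hospAssignees M' p) := by
    ext r
    simp only [hA, hospAssignees, hF, Finset.mem_biUnion, Finset.mem_filter,
      Finset.mem_univ, true_and]
    tauto
  have hdisj2 : ∀ p ∈ F, ∀ q ∈ F, p ≠ q →
      Disjoint (hospAssignees M' p) (hospAssignees M' q) := by
    intro p _ q _ hpq
    rw [Finset.disjoint_left]
    intro a ha hb
    simp only [hospAssignees, Finset.mem_filter, Finset.mem_univ, true_and] at ha hb
    rw [ha] at hb
    exact hpq (Option.some_injective _ hb)
  have key1a : A.card = ∑ p ∈ F, (hospAssignees M' p).card := by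
    rw [hAeq, Finset.card_biUnion hdisj2]
  have key1b : A.card = I.dcap k + fk I k := by
    rw [hA, card_filter_sum]
    congr 1
    · rw [← hLF]
      congr 1
      ext s
      simp [lecAssignees, hres]
    · rw [← card_dummy_filter I k]
      congr 1
      ext d
      simp only [Finset.mem_filter, Finset.mem_univ, true_and]
      constructor
      · rintro ⟨p, hp, hlp⟩
        obtain ⟨h', hh', hlh'⟩ := hdum d
        rw [hp] at hh'
        obtain rfl := Option.some_injective _ hh'
        rw [← hlh']
        exact hlp
      · intro hd
        obtain ⟨h', hh', hlh'⟩ := hdum d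
        exact ⟨h', hh', by rw [hlh', hd]⟩
  have hfk : fk I k = (∑ p ∈ F, I.cap p) - I.dcap k := rfl
  have hsum : ∑ p ∈ F, (hospAssignees M' p).card = ∑ p ∈ F, I.cap p := by
    have h1 : ∑ p ∈ F, (hospAssignees M' p).card ≤ ∑ p ∈ F, I.cap p :=
      Finset.sum_le_sum (fun p _ => hhcap p)
    omega
  by_contra hne
  have hlt : (hospAssignees M' h).card < I.cap h := lt_of_le_of_ne (hhcap h) hne
  have : ∑ p ∈ F, (hospAssignees M' p).card < ∑ p ∈ F, I.cap p :=
    Finset.sum_lt_sum (fun p _ => hhcap p) ⟨h, hhF, hlt⟩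
  omega

end AuxStmt2

/-- Let `M` be a stable matching of the SPA-ST instance `I`, and
let `M'` be a matching of the cloned HRT instance that agrees with `M` on the
student-residents and assigns every dummy resident to some hospital of its
lecturer.  Then `M'` is stable in the cloned instance and
`|M'| = |M| + Σ_k max(0, (Σ_{p ∈ P_k} c_p) − d_k)`. -/
theorem stmt2 [Fintype S] [Fintype P] [Fintype L] (I : SPAST S P L)
    (M : S → Option P) (hM : Stable I M)
    (M' : S ⊕ Dummy I → Option P)
    (hres : ∀ s, M' (Sum.inl s) = M s)
    (hdum : ∀ d : Dummy I, ∃ h, M' (Sum.inr d) = some h ∧ I.lec h = d.1)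
    (hmatch : HIsMatching (clone I) M') :
    HStable (clone I) M' ∧ msize M' = msize M + ∑ k, fk I k := by
  classical
  obtain ⟨⟨hOK, hpcap, hlcap⟩, hnb⟩ := hM
  have hhcap := hmatch.2
  constructor
  · refine ⟨hmatch, ?_⟩
    rintro (s | d) h ⟨hacc', hwant, hworse⟩
    · have hwm : WantsToMove I M s h := by
        refine ⟨hacc', ?_⟩
        rcases hwant with h0 | ⟨h', hh', hr⟩
        · left; rw [← hres s]; exact h0
        · right; exact ⟨h', by rw [← hres s]; exact hh', hr⟩
      apply hnb s h
      refine ⟨hwm, ?_⟩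
      rcases hworse with hlt | ⟨r', hr', hrank⟩
      · have hle := projAssignees_card_le' I M M' hres h
        have hnpf : ¬ ProjFull I M h := by
          intro hpf
          rw [ProjFull] at hpf
          have hcc : (clone I).cap h = I.cap h := rfl
          omega
        by_cases hLF : LecFull I M (I.lec h)
        · exact absurd
            (hosp_full_of_lecFull I M M' hres hdum hhcap hpcap _ hLF h rfl)
            (Nat.ne_of_lt hlt)
        · exact Or.inl ⟨hnpf, hLF⟩
      · obtain (s' | d') := r'
        · have hs' : M s' = some h := by
            simpa [hospAssignees, hres] using hr'
          have hrank' : I.lRank (I.lec h) s < I.lRank (I.lec h) s' := by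
            simpa [clone] using hrank
          by_cases hpf : ProjFull I M h
          · exact Or.inr (Or.inr ⟨hpf, s', by simp [projAssignees, hs'], hrank'⟩)
          · by_cases hLF : LecFull I M (I.lec h)
            · refine Or.inr (Or.inl ⟨hpf, hLF, Or.inr ⟨s', ?_, hrank'⟩⟩)
              simp only [lecAssignees, Finset.mem_filter, Finset.mem_univ, true_and]
              exact ⟨h, hs', rfl⟩
            · exact Or.inl ⟨hpf, hLF⟩
        · simp [clone] at hrank
    · obtain ⟨h', hh', hlh'⟩ := hdum d
      rcases hwant with h0 | ⟨h'', hh'', hr⟩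
      · rw [h0] at hh'; cases hh'
      · simp [clone] at hr
  · have h1 : msize M' = msize M + Fintype.card (Dummy I) := by
      rw [msize, card_filter_sum]
      congr 1
      · rw [msize]
        congr 1
        ext s
        simp [hres]
      · rw [Finset.filter_true_of_mem, Finset.card_univ]
        intro d _
        obtain ⟨h, hh, _⟩ := hdum d
        simp [hh]
    rw [h1]
    congr 1
    simp [Dummy, Fintype.card_sigma]
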